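/- Let d ≥ 1, let μ be the Haar probability measure on the unitary group U(d) = Matrix.unitaryGroup (Fin d) ℂ, let e ∈ ℂ^d be a unit vector (ℓ² norm), and write ξ_U := U *ᵥ e. Then for every d×d complex matrix O and every vector ψ ∈ ℂ^d, ∫_{U(d)} ⟨ψ, O *ᵥ ξ_U⟩ · ⟨ξ_U, O *ᵥ ψ⟩ dμ(U) = ⟨ψ, O *ᵥ (O *ᵥ ψ)⟩ / d, where ⟨v, w⟩ := ∑_i conj(v i)·(w i). -/

import Mathlib

open MeasureTheory Matrix

/-- The standard inner product `⟨v, w⟩ = ∑ i, conj (v i) * w i` on `ℂ^d`. -/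
noncomputable def cip {d : ℕ} (v w : Fin d → ℂ) : ℂ :=
  ∑ i, (starRingEnd ℂ) (v i) * w i

private lemma conj_mul_self' (z : ℂ) : (starRingEnd ℂ) z * z = ((‖z‖ ^ 2 : ℝ) : ℂ) := by
  rw [mul_comm, Complex.mul_conj, Complex.normSq_eq_norm_sq]

/-- Cross-moment identity for Haar-random states (Appendix C of the paper):
`E[⟨ψ, O ξ⟩⟨ξ, O ψ⟩] = ⟨ψ, O² ψ⟩ / d` where `ξ = U *ᵥ e` for Haar-random `U`. -/
theorem stmt11 (d : ℕ) (hd : 1 ≤ d)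
    [MeasurableSpace (Matrix.unitaryGroup (Fin d) ℂ)]
    [BorelSpace (Matrix.unitaryGroup (Fin d) ℂ)]
    (μ : Measure (Matrix.unitaryGroup (Fin d) ℂ))
    [μ.IsHaarMeasure] [IsProbabilityMeasure μ]
    (e : Fin d → ℂ) (he : ∑ i, ‖e i‖ ^ 2 = 1)
    (O : Matrix (Fin d) (Fin d) ℂ) (ψ : Fin d → ℂ) :
    ∫ U : Matrix.unitaryGroup (Fin d) ℂ,
        cip ψ (O *ᵥ ((U : Matrix (Fin d) (Fin d) ℂ) *ᵥ e)) *
          cip ((U : Matrix (Fin d) (Fin d) ℂ) *ᵥ e) (O *ᵥ ψ) ∂μ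
      = cip ψ (O *ᵥ (O *ᵥ ψ)) / (d : ℂ) := by
  classical
  set ξ : Matrix.unitaryGroup (Fin d) ℂ → Fin d → ℂ :=
    fun U => (U : Matrix (Fin d) (Fin d) ℂ) *ᵥ e with hξ
  -- the vector ξ U is always a unit vector
  have hnorm : ∀ U : Matrix.unitaryGroup (Fin d) ℂ,
      ∑ k, (starRingEnd ℂ) (ξ U k) * ξ U k = 1 := by
    intro U
    have h1 : star (ξ U) ⬝ᵥ ξ U = star e ⬝ᵥ e := by
      rw [hξ]
      simp only [star_mulVec, dotProduct_mulVec, vecMul_vecMul]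
      rw [← Matrix.star_eq_conjTranspose, Matrix.UnitaryGroup.star_mul_self, vecMul_one]
    calc ∑ k, (starRingEnd ℂ) (ξ U k) * ξ U k = star (ξ U) ⬝ᵥ ξ U := by
          simp only [dotProduct, Pi.star_apply, starRingEnd_apply]
    _ = star e ⬝ᵥ e := h1
    _ = 1 := by
          simp only [dotProduct, Pi.star_apply, ← starRingEnd_apply, conj_mul_self']
          rw [← Complex.ofReal_sum, he, Complex.ofReal_one]
  have hnormR : ∀ U : Matrix.unitaryGroup (Fin d) ℂ, ∑ k, ‖ξ U k‖ ^ 2 = 1 := by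
    intro U
    have := hnorm U
    simp only [conj_mul_self'] at this
    rw [← Complex.ofReal_sum] at this
    exact_mod_cast this
  have hbound : ∀ (U : Matrix.unitaryGroup (Fin d) ℂ) (k : Fin d), ‖ξ U k‖ ≤ 1 := by
    intro U k
    have h1 : ‖ξ U k‖ ^ 2 ≤ 1 := by
      rw [← hnormR U]
      exact Finset.single_le_sum (f := fun k => ‖ξ U k‖ ^ 2)
        (fun i _ => sq_nonneg _) (Finset.mem_univ k)
    nlinarith [norm_nonneg (ξ U k)]
  have hcont : ∀ k, Continuous fun U : Matrix.unitaryGroup (Fin d) ℂ => ξ U k := fun k =>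
    (continuous_apply k).comp (continuous_subtype_val.matrix_mulVec continuous_const)
  have hint : ∀ k l, Integrable
      (fun U : Matrix.unitaryGroup (Fin d) ℂ => ξ U k * (starRingEnd ℂ) (ξ U l)) μ := by
    intro k l
    have hc : Continuous fun U : Matrix.unitaryGroup (Fin d) ℂ =>
        ξ U k * (starRingEnd ℂ) (ξ U l) :=
      (hcont k).mul (Complex.continuous_conj.comp (hcont l))
    refine (integrable_const (1 : ℝ)).mono' hc.aestronglyMeasurable
      (Filter.Eventually.of_forall fun U => ?_)
    rw [norm_mul]
    have h2 : ‖(starRingEnd ℂ) (ξ U l)‖ = ‖ξ U l‖ := by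
      rw [starRingEnd_apply, norm_star]
    rw [h2]
    exact mul_le_one₀ (hbound U k) (norm_nonneg _) (hbound U l)
  set M : Fin d → Fin d → ℂ :=
    fun k l => ∫ U, ξ U k * (starRingEnd ℂ) (ξ U l) ∂μ with hMdef
  -- key expansion of integrals of quadratic forms in ξ
  have hkey : ∀ a : Fin d → Fin d → ℂ,
      ∫ U, (∑ k, ∑ l, a k l * (ξ U k * (starRingEnd ℂ) (ξ U l))) ∂μ
        = ∑ k, ∑ l, a k l * M k l := by
    intro a
    rw [integral_finset_sum _ (fun k _ =>
      integrable_finset_sum _ (fun l _ => (hint k l).const_mul (a k l)))]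
    refine Finset.sum_congr rfl fun k _ => ?_
    rw [integral_finset_sum _ (fun l _ => (hint k l).const_mul (a k l))]
    exact Finset.sum_congr rfl fun l _ => integral_const_mul _ _
  -- invariance of M under unitary conjugation
  have hM : ∀ (V : Matrix.unitaryGroup (Fin d) ℂ) (i j : Fin d),
      M i j = ∑ k, ∑ l, ((V : Matrix (Fin d) (Fin d) ℂ) i k *
        (starRingEnd ℂ) ((V : Matrix (Fin d) (Fin d) ℂ) j l)) * M k l := by
    intro V i j
    have h0 : M i j = ∫ U, ξ (V * U) i * (starRingEnd ℂ) (ξ (V * U) j) ∂μ :=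
      (integral_mul_left_eq_self (μ := μ)
        (fun U => ξ U i * (starRingEnd ℂ) (ξ U j)) V).symm
    have hexp : ∀ U : Matrix.unitaryGroup (Fin d) ℂ,
        ξ (V * U) i * (starRingEnd ℂ) (ξ (V * U) j)
          = ∑ k, ∑ l, ((V : Matrix (Fin d) (Fin d) ℂ) i k *
              (starRingEnd ℂ) ((V : Matrix (Fin d) (Fin d) ℂ) j l))
            * (ξ U k * (starRingEnd ℂ) (ξ U l)) := by
      intro U
      have hVU : ξ (V * U) = (V : Matrix (Fin d) (Fin d) ℂ) *ᵥ ξ U := by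
        rw [hξ]
        show ((V * U : Matrix.unitaryGroup (Fin d) ℂ) : Matrix (Fin d) (Fin d) ℂ) *ᵥ e = _
        rw [Submonoid.coe_mul, ← mulVec_mulVec]
      rw [hVU]
      simp only [Matrix.mulVec, dotProduct, map_sum, _root_.map_mul, Finset.sum_mul_sum]
      exact Finset.sum_congr rfl fun k _ => Finset.sum_congr rfl fun l _ => by ring
    rw [h0, integral_congr_ae (Filter.Eventually.of_forall hexp), hkey]
  -- off-diagonal entries of M vanish
  have hoff : ∀ i j : Fin d, i ≠ j → M i j = 0 := by
    intro i j hij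
    set v : Fin d → ℂ := fun k => if k = i then -1 else 1 with hv
    have hvv : (fun k => v k * star (v k)) = fun _ => (1 : ℂ) := by
      funext k
      by_cases h : k = i <;> simp [hv, h]
    have hD : Matrix.diagonal v ∈ Matrix.unitaryGroup (Fin d) ℂ := by
      rw [Matrix.mem_unitaryGroup_iff, Matrix.star_eq_conjTranspose,
        Matrix.diagonal_conjTranspose, Matrix.diagonal_mul_diagonal]
      simp only [Pi.star_apply]
      rw [hvv, Matrix.diagonal_one]
    have h := hM ⟨Matrix.diagonal v, hD⟩ i j
    rw [Finset.sum_eq_single i ?_ (by simp)] at h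
    · rw [Finset.sum_eq_single j ?_ (by simp)] at h
      · simp only [Matrix.diagonal_apply_eq] at h
        have hvi : v i = -1 := by simp [hv]
        have hvj : v j = 1 := by simp [hv, (Ne.symm hij)]
        rw [hvi, hvj] at h
        simp only [_root_.map_one] at h
        linear_combination h / 2
      · intro l _ hl
        simp [Matrix.diagonal_apply_ne v (Ne.symm hl)]
    · intro k _ hk
      simp [Matrix.diagonal_apply_ne v (Ne.symm hk)]
  -- all diagonal entries are equal
  set z : Fin d := ⟨0, hd⟩ with hz
  have hdiag : ∀ k : Fin d, M k k = M z z := by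
    intro k
    set σ : Equiv.Perm (Fin d) := Equiv.swap k z with hσ
    set P : Matrix (Fin d) (Fin d) ℂ :=
      Matrix.of fun a b => if b = σ a then 1 else 0 with hP
    have hPu : P ∈ Matrix.unitaryGroup (Fin d) ℂ := by
      rw [Matrix.mem_unitaryGroup_iff]
      funext a b
      simp only [Matrix.mul_apply, Matrix.star_apply, hP, Matrix.of_apply]
      rw [Finset.sum_eq_single (σ a)]
      · by_cases h : a = b
        · subst h
          simp [Matrix.one_apply_eq]
        · have : ¬ σ a = σ b := fun hc => h (σ.injective hc)
          simp [Matrix.one_apply, h, this]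
      · intro c _ hc
        simp [hc]
      · simp
    have h := hM ⟨P, hPu⟩ k k
    rw [Finset.sum_eq_single (σ k) ?_ (by simp)] at h
    · rw [Finset.sum_eq_single (σ k) ?_ (by simp)] at h
      · have h' : M k k = P k (σ k) * (starRingEnd ℂ) (P k (σ k)) * M (σ k) (σ k) := h
        have hpk : P k (σ k) = (1 : ℂ) := by simp [hP]
        rw [hpk, _root_.map_one, one_mul, one_mul] at h'
        rw [h']
        have hsk : σ k = z := Equiv.swap_apply_left k z
        rw [hsk]
      · intro l _ hl
        simp [hP, hl]
    · intro c _ hc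
      simp [hP, hc]
  -- the trace of M is 1
  have htrace : ∑ k, M k k = 1 := by
    rw [hMdef]
    rw [← integral_finset_sum _ (fun k _ => hint k k)]
    have : ∀ U : Matrix.unitaryGroup (Fin d) ℂ,
        ∑ k, ξ U k * (starRingEnd ℂ) (ξ U k) = 1 := by
      intro U
      rw [← hnorm U]
      exact Finset.sum_congr rfl fun k _ => by ring
    rw [integral_congr_ae (Filter.Eventually.of_forall this)]
    simp
  -- hence M = (1/d) • I
  have hdne : (d : ℂ) ≠ 0 := Nat.cast_ne_zero.mpr (by omega)
  have hMval : ∀ k l : Fin d, M k l = if k = l then 1 / (d : ℂ) else 0 := by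
    intro k l
    by_cases hkl : k = l
    · subst hkl
      rw [if_pos rfl, hdiag k]
      have hsum : ∑ j : Fin d, M j j = (d : ℂ) * M z z := by
        rw [Finset.sum_congr rfl fun j _ => hdiag j]
        simp [Finset.sum_const, nsmul_eq_mul]
      have h2 : (d : ℂ) * M z z = 1 := by rw [← hsum, htrace]
      rw [eq_div_iff hdne]
      linear_combination h2
    · rw [if_neg hkl]
      exact hoff k l hkl
  -- final computation
  set c : Fin d → ℂ := fun k => ∑ i, (starRingEnd ℂ) (ψ i) * O i k with hc
  set b : Fin d → ℂ := O *ᵥ ψ with hb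
  have hcw : ∀ w : Fin d → ℂ, cip ψ (O *ᵥ w) = ∑ k, c k * w k := by
    intro w
    simp only [cip, Matrix.mulVec, dotProduct, Finset.mul_sum, hc]
    rw [Finset.sum_comm]
    exact Finset.sum_congr rfl fun k _ => by
      rw [Finset.sum_mul]
      exact Finset.sum_congr rfl fun i _ => by ring
  have hexp2 : ∀ U : Matrix.unitaryGroup (Fin d) ℂ,
      cip ψ (O *ᵥ ξ U) * cip (ξ U) (O *ᵥ ψ)
        = ∑ k, ∑ l, (c k * b l) * (ξ U k * (starRingEnd ℂ) (ξ U l)) := by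
    intro U
    have h1 : cip ψ (O *ᵥ ξ U) = ∑ k, c k * ξ U k := hcw (ξ U)
    have h2 : cip (ξ U) (O *ᵥ ψ) = ∑ l, (starRingEnd ℂ) (ξ U l) * b l := by
      simp only [cip, hb]
    rw [h1, h2, Finset.sum_mul_sum]
    exact Finset.sum_congr rfl fun k _ => Finset.sum_congr rfl fun l _ => by ring
  rw [integral_congr_ae (Filter.Eventually.of_forall hexp2), hkey]
  have hfinal : ∑ k, ∑ l, (c k * b l) * M k l = (∑ k, c k * b k) / (d : ℂ) := by
    rw [Finset.sum_div]
    refine Finset.sum_congr rfl fun k _ => ?_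
    rw [Finset.sum_eq_single k ?_ (by simp)]
    · rw [hMval k k, if_pos rfl]
      ring
    · intro l _ hl
      rw [hMval k l, if_neg (fun h => hl h.symm), mul_zero]
  rw [hfinal]
  congr 1
  exact (hcw b).symm
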